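/- Let A_1,...,A_n and B_1,...,B_m be symmetric positive semidefinite matrices of the same size, A = Σ_i A_i, B = Σ_j B_j. Suppose for each i there is a subset Σ_i ⊆ {1,...,m} and a real s_i ≥ 0 such that A_i ⪯ s_i · Σ_{j∈Σ_i} B_j (Loewner order). Then A ⪯ c·B, where c = max over j of Σ_{i : j∈Σ_i} s_i. -/

import Mathlib

open Matrix Finset

lemma psd_sum {d : ℕ} {ι : Type*} (t : Finset ι) (f : ι → Matrix (Fin d) (Fin d) ℝ)
    (h : ∀ i ∈ t, (f i).PosSemidef) : (∑ i ∈ t, f i).PosSemidef := by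
  classical
  induction t using Finset.induction with
  | empty => simpa using Matrix.PosSemidef.zero
  | insert _ _ hx ih =>
    rw [Finset.sum_insert hx]
    exact (h _ (Finset.mem_insert_self _ _)).add
      (ih fun i hi => h i (Finset.mem_insert_of_mem hi))

lemma psd_smul {d : ℕ} {M : Matrix (Fin d) (Fin d) ℝ} (hM : M.PosSemidef)
    {r : ℝ} (hr : 0 ≤ r) : (r • M).PosSemidef := by
  refine Matrix.posSemidef_iff_dotProduct_mulVec.mpr ⟨?_, fun x => ?_⟩
  · unfold Matrix.IsHermitian
    rw [conjTranspose_smul, hM.1]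
    simp
  · rw [smul_mulVec, dotProduct_smul]
    simpa using mul_nonneg hr (hM.dotProduct_mulVec_nonneg x)

/-- Congestion-Dilation Lemma. -/
theorem congestion_dilation (d N M : ℕ)
    (A : Fin N → Matrix (Fin d) (Fin d) ℝ)
    (B : Fin M → Matrix (Fin d) (Fin d) ℝ)
    (hA : ∀ i, (A i).PosSemidef) (hB : ∀ j, (B j).PosSemidef)
    (Sig : Fin N → Finset (Fin M)) (s : Fin N → ℝ) (hs : ∀ i, 0 ≤ s i)
    (hsupport : ∀ i, (s i • ∑ j ∈ Sig i, B j - A i).PosSemidef)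
    (c : ℝ)
    (hc : IsGreatest {t : ℝ | ∃ j : Fin M,
        t = ∑ i ∈ Finset.univ.filter (fun i => j ∈ Sig i), s i} c) :
    (c • ∑ j, B j - ∑ i, A i).PosSemidef := by
  classical
  have swap : ∑ i : Fin N, s i • ∑ j ∈ Sig i, B j
      = ∑ j : Fin M, (∑ i ∈ Finset.univ.filter (fun i => j ∈ Sig i), s i) • B j := by
    calc ∑ i : Fin N, s i • ∑ j ∈ Sig i, B j
        = ∑ i : Fin N, ∑ j : Fin M, if j ∈ Sig i then s i • B j else 0 := by
          simp [Finset.smul_sum, Finset.sum_ite_mem]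
      _ = ∑ j : Fin M, ∑ i : Fin N, if j ∈ Sig i then s i • B j else 0 := Finset.sum_comm
      _ = _ := by
          refine Finset.sum_congr rfl fun j _ => ?_
          rw [Finset.sum_smul, ← Finset.sum_filter]
  have key : (c • ∑ j, B j - ∑ i, A i)
      = (∑ i, (s i • ∑ j ∈ Sig i, B j - A i))
        + ∑ j, (c - ∑ i ∈ Finset.univ.filter (fun i => j ∈ Sig i), s i) • B j := by
    rw [Finset.sum_sub_distrib]
    have : ∀ j : Fin M, (c - ∑ i ∈ Finset.univ.filter (fun i => j ∈ Sig i), s i) • B j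
        = c • B j - (∑ i ∈ Finset.univ.filter (fun i => j ∈ Sig i), s i) • B j :=
      fun j => sub_smul _ _ _
    rw [Finset.sum_congr rfl fun j _ => this j, Finset.sum_sub_distrib, swap, Finset.smul_sum]
    abel
  rw [key]
  refine Matrix.PosSemidef.add (psd_sum _ _ fun i _ => hsupport i)
    (psd_sum _ _ fun j _ => psd_smul (hB j) ?_)
  have := hc.2 ⟨j, rfl⟩
  linarith
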